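/- arXiv:1605.00273 — 4 statements merged into one kernel-verified Lean document; each statement's English description precedes it below -/
import Mathlib

section
/- For an integer M ≥ 2, if f(M) = 2M − 1 then M is a power of 2, where f(M) = Σ_{n=0}^{∞} ⌊M/2^n⌋. -/
def f (M : ℕ) : ℕ := ∑ n ∈ Finset.range (M + 1), M / 2 ^ n

lemma digits_sum_one {M : ℕ} (hM : 0 < M) (h : (Nat.digits 2 M).sum = 1) :
    ∃ r : ℕ, M = 2 ^ r := by
  induction M using Nat.strong_induction_on with
  | _ M ih =>
    rw [Nat.digits_def' (by norm_num) hM, List.sum_cons] at h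
    rcases Nat.eq_zero_or_pos (M / 2) with h2 | h2
    · have : M = 1 := by omega
      exact ⟨0, by omega⟩
    · have hmod : M % 2 = 0 := by
        by_contra hm
        have hm1 : M % 2 = 1 := by omega
        have hz : (Nat.digits 2 (M / 2)).sum = 0 := by omega
        have hne : Nat.digits 2 (M / 2) ≠ [] := Nat.digits_ne_nil_iff_ne_zero.mpr (by omega)
        have hlast := Nat.getLast_digit_ne_zero 2 (m := M / 2) (by omega)
        exact hlast (List.sum_eq_zero_iff.mp hz _ (List.getLast_mem hne))
      rw [hmod, zero_add] at h
      obtain ⟨r, hr⟩ := ih (M / 2) (by omega) h2 h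
      exact ⟨r + 1, by omega⟩

theorem stmt_2 (M : ℕ) (hM : 2 ≤ M) (h : f M = 2 * M - 1) : ∃ r : ℕ, M = 2 ^ r := by
  have hfact : Fact (Nat.Prime 2) := ⟨Nat.prime_two⟩
  have hv : padicValNat 2 (Nat.factorial M) = ∑ i ∈ Finset.Ico 1 (M + 1), M / 2 ^ i :=
    padicValNat_factorial (by
      calc Nat.log 2 M ≤ M := Nat.log_le_self 2 M
        _ < M + 1 := Nat.lt_succ_self M)
  have hsplit : f M = M + padicValNat 2 (Nat.factorial M) := by
    rw [hv, f, Finset.range_eq_Ico, Finset.sum_eq_sum_Ico_succ_bot (by omega)]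
    simp
  have hleg := sub_one_mul_padicValNat_factorial (p := 2) M
  have hds := Nat.digit_sum_le 2 M
  have hs1 : (Nat.digits 2 M).sum = 1 := by omega
  exact digits_sum_one (by omega) hs1
end

section
/- Let Λ be a finite abelian subgroup of (ℝ/ℤ)^e and suppose that for every element x of Λ, the sum of the entries of x (taking representatives in [0,1)) is at most s. Then for every x ∈ Λ, the number of nonzero coordinates of x is at most 2s. -/
/-- The representative in `[0,1)` of an element of `ℝ/ℤ`. -/
noncomputable def rep (x : AddCircle (1 : ℝ)) : ℝ := (AddCircle.equivIco 1 0 x : ℝ)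

/-- `height x`: the sum of the representatives in `[0,1)` of the coordinates. -/
noncomputable def height {e : ℕ} (x : Fin e → AddCircle (1 : ℝ)) : ℝ := ∑ i, rep (x i)

/-- `wt x`: the number of nonzero coordinates. -/
noncomputable def wt {e : ℕ} (x : Fin e → AddCircle (1 : ℝ)) : ℕ := Nat.card {i : Fin e // x i ≠ 0}

lemma rep_mem (x : AddCircle (1 : ℝ)) : rep x ∈ Set.Ico (0:ℝ) 1 := by
  have := (AddCircle.equivIco 1 0 x).2
  simpa [rep] using this

lemma coe_rep (x : AddCircle (1 : ℝ)) : ((rep x : ℝ) : AddCircle (1 : ℝ)) = x :=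
  (AddCircle.equivIco 1 0).symm_apply_apply x

lemma rep_zero : rep (0 : AddCircle (1 : ℝ)) = 0 := by
  simp [rep, AddCircle.equivIco]

lemma rep_eq_zero_iff {x : AddCircle (1 : ℝ)} : rep x = 0 ↔ x = 0 := by
  constructor
  · intro h
    have := coe_rep x
    rw [h] at this
    simpa using this.symm
  · rintro rfl; exact rep_zero

lemma rep_add_rep_neg {x : AddCircle (1 : ℝ)} (hx : x ≠ 0) : rep x + rep (-x) = 1 := by
  have hsum : ((rep x + rep (-x) : ℝ) : AddCircle (1:ℝ)) = 0 := by
    have : ((rep x + rep (-x) : ℝ) : AddCircle (1:ℝ))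
        = ((rep x : ℝ) : AddCircle (1:ℝ)) + ((rep (-x) : ℝ) : AddCircle (1:ℝ)) := by
      exact AddCircle.coe_add (p := (1:ℝ)) _ _
    rw [this, coe_rep, coe_rep]; simp
  rw [AddCircle.coe_eq_zero_iff] at hsum
  obtain ⟨n, hn⟩ := hsum
  simp only [zsmul_eq_mul, mul_one] at hn
  have h1 := rep_mem x
  have h2 := rep_mem (-x)
  have hxs : rep x ≠ 0 := fun h => hx (rep_eq_zero_iff.mp h)
  have hpos : (0:ℝ) < rep x + rep (-x) := by
    rcases lt_or_eq_of_le h1.1 with h | h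
    · linarith [h2.1]
    · exact absurd h.symm hxs
  have hlt : rep x + rep (-x) < 2 := by linarith [h1.2, h2.2]
  have hn1 : n = 1 := by
    have a : (0:ℝ) < n := by linarith
    have b : (n:ℝ) < 2 := by linarith
    have a' : (0:ℤ) < n := by exact_mod_cast a
    have b' : n < 2 := by exact_mod_cast b
    omega
  rw [← hn, hn1]; norm_num

theorem stmt_5 (e : ℕ) (s : ℝ) (Λ : AddSubgroup (Fin e → AddCircle (1 : ℝ)))
    (hfin : (Λ : Set (Fin e → AddCircle (1 : ℝ))).Finite)
    (hdeg : ∀ x ∈ Λ, height x ≤ s) :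
    ∀ x ∈ Λ, (wt x : ℝ) ≤ 2 * s := by
  intro x hx
  have key : (wt x : ℝ) = ∑ i, (rep (x i) + rep (-(x i))) := by
    have h1 : ∀ i : Fin e, rep (x i) + rep (-(x i)) = if x i ≠ 0 then (1:ℝ) else 0 := by
      intro i
      by_cases h : x i = 0
      · simp [h, rep_zero]
      · simp [h, rep_add_rep_neg h]
    rw [Finset.sum_congr rfl (fun i _ => h1 i)]
    rw [Finset.sum_ite, Finset.sum_const, Finset.sum_const]
    simp [wt, Nat.card_eq_fintype_card, Fintype.card_subtype]
  have heq : (wt x : ℝ) = height x + height (-x) := by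
    rw [key, height, height, ← Finset.sum_add_distrib]
    rfl
  rw [heq]
  have := hdeg x hx
  have := hdeg (-x) (neg_mem hx)
  linarith
end

section
/- Let Λ be a finite abelian subgroup of (ℝ/ℤ)^e with e ≥ 3, and suppose wt(x) ≤ M for all x ∈ Λ, where M ≥ 2 is an integer. If every coordinate index i ∈ {1,…,e} lies in the support of some element of Λ, then e ≤ f(M). -/
open Finset

abbrev Ac := AddCircle (1 : ℝ)

noncomputable local instance : DecidableEq Ac := Classical.decEq _

noncomputable def wtF {ι : Type} [Fintype ι] (x : ι → Ac) : ℕ :=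
  (Finset.univ.filter fun i => x i ≠ 0).card

lemma f_rec {M : ℕ} (hM : 1 ≤ M) : f M = M + f (M / 2) := by
  have h1 : ∀ n : ℕ, M / 2 ^ (n + 1) = (M / 2) / 2 ^ n := by
    intro n
    rw [pow_succ', Nat.div_div_eq_div_mul]
  have h2 : f M = (∑ n ∈ Finset.range M, M / 2 ^ (n + 1)) + M / 2 ^ 0 :=
    Finset.sum_range_succ' _ M
  have h3 : (∑ n ∈ Finset.range M, M / 2 ^ (n + 1))
      = ∑ n ∈ Finset.range M, (M / 2) / 2 ^ n := by
    exact Finset.sum_congr rfl fun n _ => h1 n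
  have hsub : Finset.range (M / 2 + 1) ⊆ Finset.range M := by
    intro n hn
    simp only [Finset.mem_range] at *
    have := Nat.div_lt_self hM one_lt_two
    omega
  have h4 : (∑ n ∈ Finset.range M, (M / 2) / 2 ^ n) = f (M / 2) := by
    rw [f]
    refine (Finset.sum_subset hsub ?_).symm
    intro n _ hn
    simp only [Finset.mem_range, not_lt] at hn
    apply Nat.div_eq_of_lt
    calc M / 2 < 2 ^ (M / 2 + 1) := by
          have := Nat.lt_two_pow_self (n := M / 2)
          have : (2:ℕ) ^ (M/2) ≤ 2 ^ (M/2+1) := Nat.pow_le_pow_right (by norm_num) (by omega)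
          omega
      _ ≤ 2 ^ n := Nat.pow_le_pow_right (by norm_num) hn
  rw [h2, h3, h4, pow_zero, Nat.div_one, add_comm]

lemma fiber_card_le {N : ℕ} [NeZero N] (a c : Ac) (ha : a ≠ 0) (haN : N • a = 0) :
    2 * (Finset.univ.filter fun t : ZMod N => t.val • a = c).card ≤ N := by
  have hN : 0 < N := Nat.pos_of_ne_zero (NeZero.ne N)
  have hN2 : 2 ≤ N := by
    rcases Nat.lt_or_ge N 2 with h | h
    · have h1 : N = 1 := by omega
      subst h1
      simp at haN
      exact absurd haN ha
    · exact h
  set φ : ZMod N →+ Ac := ZMod.lift N ⟨zmultiplesHom Ac a, by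
    simpa [natCast_zsmul] using haN⟩ with hφdef
  have hφ : ∀ t : ZMod N, φ t = t.val • a := by
    intro t
    have h1 : ((t.val : ℤ) : ZMod N) = t := by
      push_cast
      exact ZMod.natCast_rightInverse t
    calc φ t = φ ((t.val : ℤ) : ZMod N) := by rw [h1]
      _ = (t.val : ℤ) • a := ZMod.lift_coe _ _ _
      _ = t.val • a := natCast_zsmul a t.val
  have hφ1 : φ 1 = a := by
    have h1 : ((1 : ℤ) : ZMod N) = 1 := by push_cast; ring
    rw [← h1, ZMod.lift_coe]
    simp
  -- kernel card
  set K : Finset (ZMod N) := Finset.univ.filter fun t => φ t = 0 with hK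
  have hKcard : Nat.card φ.ker = K.card := by
    have h1 : Nat.card φ.ker = Nat.card {t : ZMod N // φ t = 0} :=
      Nat.card_congr (Equiv.subtypeEquivRight fun t => AddMonoidHom.mem_ker)
    rw [h1, Nat.card_eq_fintype_card, Fintype.card_subtype]
  have hKdvd : K.card ∣ N := by
    have := AddSubgroup.card_addSubgroup_dvd_card φ.ker
    rwa [hKcard, Nat.card_zmod] at this
  have hKne : K.card ≠ N := by
    intro h
    have huniv : K = Finset.univ := Finset.eq_univ_of_card _ (by rw [h, ZMod.card])
    have h2 : (1 : ZMod N) ∈ K := huniv ▸ Finset.mem_univ _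
    rw [hK, Finset.mem_filter] at h2
    exact ha (hφ1 ▸ h2.2)
  have hK2 : 2 * K.card ≤ N := by
    obtain ⟨d, hd⟩ := hKdvd
    have hd2 : 2 ≤ d := by
      rcases Nat.lt_or_ge d 2 with h | h
      · interval_cases d <;> omega
      · exact h
    calc 2 * K.card ≤ d * K.card := Nat.mul_le_mul_right _ hd2
      _ = N := by rw [Nat.mul_comm]; exact hd.symm
  -- fiber
  suffices h : (Finset.univ.filter fun t : ZMod N => t.val • a = c).card ≤ K.card by omega
  rcases Finset.eq_empty_or_nonempty (Finset.univ.filter fun t : ZMod N => t.val • a = c)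
    with h | ⟨t0, ht0⟩
  · rw [h]; simp
  · rw [Finset.mem_filter] at ht0
    apply Finset.card_le_card_of_injOn (fun u => u - t0)
    · intro u hu
      rw [Finset.mem_coe, Finset.mem_filter] at hu
      rw [Finset.mem_coe, hK, Finset.mem_filter]
      refine ⟨Finset.mem_univ _, ?_⟩
      rw [map_sub, hφ u, hφ t0, hu.2, ht0.2, sub_self]
    · intro u _ v _ h
      simpa using sub_left_injective h

lemma csplit2 {ι : Type} [Fintype ι] (p q r s : ι → Prop)
    [DecidablePred p] [DecidablePred q] [DecidablePred r] [DecidablePred s]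
    (h1 : ∀ i, (p i ∧ q i) ↔ r i) (h2 : ∀ i, (p i ∧ ¬ q i) ↔ s i) :
    (Finset.univ.filter p).card
      = (Finset.univ.filter r).card + (Finset.univ.filter s).card := by
  have key := Finset.card_filter_add_card_filter_not
    (s := Finset.univ.filter p) (p := q)
  have e1 : (Finset.univ.filter p).filter q = Finset.univ.filter r := by
    ext i
    simp only [Finset.mem_filter, Finset.mem_univ, true_and, and_assoc]
    have := h1 i
    tauto
  have e2 : (Finset.univ.filter p).filter (fun i => ¬ q i) = Finset.univ.filter s := by
    ext i
    simp only [Finset.mem_filter, Finset.mem_univ, true_and, and_assoc]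
    have := h2 i
    tauto
  rw [e1, e2] at key
  exact key.symm

lemma key_le {ι : Type} [Fintype ι] (Λ : AddSubgroup (ι → Ac))
    (hfin : (Λ : Set (ι → Ac)).Finite)
    (x : ι → Ac) (hx : x ∈ Λ) (hmax : ∀ y ∈ Λ, wtF y ≤ wtF x)
    (y : ι → Ac) (hy : y ∈ Λ) :
    (Finset.univ.filter fun i => y i ≠ 0 ∧ x i = 0).card
      ≤ (Finset.univ.filter fun i => y i ≠ 0 ∧ x i ≠ 0).card := by
  haveI : Finite Λ := hfin.to_subtype
  set N : ℕ := addOrderOf (⟨y, hy⟩ : Λ) with hNdef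
  have hN : 0 < N := addOrderOf_pos _
  haveI : NeZero N := ⟨hN.ne'⟩
  have hNy : N • y = 0 := by
    have h := addOrderOf_nsmul_eq_zero (⟨y, hy⟩ : Λ)
    exact congrArg Subtype.val h
  set z : ZMod N → (ι → Ac) := fun t => x + t.val • y with hzdef
  have hz : ∀ t, z t ∈ Λ := fun t => Λ.add_mem hx (Λ.nsmul_mem hy t.val)
  have hzi : ∀ t i, z t i = x i + t.val • y i := fun t i => rfl
  set cnt : ι → ℕ := fun i => (Finset.univ.filter fun t : ZMod N => z t i ≠ 0).card with hcnt
  -- total sum identity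
  have hswap : ∑ t : ZMod N, wtF (z t) = ∑ i : ι, cnt i := by
    simp only [wtF, hcnt, Finset.card_filter]
    exact Finset.sum_comm
  -- upper bound
  have hupper : ∑ i : ι, cnt i ≤ N * wtF x := by
    rw [← hswap]
    calc ∑ t : ZMod N, wtF (z t) ≤ ∑ _t : ZMod N, wtF x :=
          Finset.sum_le_sum fun t _ => hmax _ (hz t)
      _ = N * wtF x := by rw [Finset.sum_const, Finset.card_univ, ZMod.card, smul_eq_mul]
  -- coordinate bounds
  have hSY : ∀ i, y i = 0 → x i ≠ 0 → cnt i = N := by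
    intro i hyi hxi
    have hall : ∀ t : ZMod N, z t i ≠ 0 := by
      intro t
      rw [hzi, hyi, smul_zero, add_zero]
      exact hxi
    have h0 : (Finset.univ.filter fun t : ZMod N => z t i ≠ 0) = Finset.univ :=
      Finset.filter_true_of_mem fun t _ => hall t
    have h1 : cnt i = (Finset.univ : Finset (ZMod N)).card := congrArg Finset.card h0
    rw [h1, Finset.card_univ, ZMod.card]
  have hYb : ∀ i, y i ≠ 0 → N ≤ 2 * cnt i := by
    intro i hyi
    have hcompl : cnt i + (Finset.univ.filter fun t : ZMod N => ¬ (z t i ≠ 0)).card = N := by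
      have h0 := Finset.card_filter_add_card_filter_not
        (s := (Finset.univ : Finset (ZMod N))) (p := fun t => z t i ≠ 0)
      rw [Finset.card_univ, ZMod.card] at h0
      exact h0
    have hiff : ∀ t : ZMod N, (¬ (z t i ≠ 0)) ↔ (t.val • y i = -(x i)) := by
      intro t
      rw [not_not, hzi]
      constructor
      · intro h
        exact eq_neg_of_add_eq_zero_right h
      · intro h
        rw [h, add_neg_cancel]
    have hbadeq : (Finset.univ.filter fun t : ZMod N => ¬ (z t i ≠ 0))
        = (Finset.univ.filter fun t : ZMod N => t.val • y i = -(x i)) :=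
      Finset.filter_congr fun t _ => hiff t
    have hNyi : N • y i = 0 := congrFun hNy i
    have hfib := fiber_card_le (y i) (-(x i)) hyi hNyi
    rw [← hbadeq] at hfib
    omega
  -- splitting identities
  have hx0 : wtF x = (Finset.univ.filter fun i => y i ≠ 0 ∧ x i ≠ 0).card
      + (Finset.univ.filter fun i => x i ≠ 0 ∧ y i = 0).card :=
    csplit2 (fun i => x i ≠ 0) (fun i => y i ≠ 0) _ _ (fun i => by tauto) (fun i => by tauto)
  have hxsplit : N * wtF x
      = N * (Finset.univ.filter fun i => y i ≠ 0 ∧ x i ≠ 0).card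
        + N * (Finset.univ.filter fun i => x i ≠ 0 ∧ y i = 0).card := by
    rw [hx0, Nat.mul_add]
  have hY0 : (Finset.univ.filter fun i => y i ≠ 0).card
      = (Finset.univ.filter fun i => y i ≠ 0 ∧ x i ≠ 0).card
        + (Finset.univ.filter fun i => y i ≠ 0 ∧ x i = 0).card :=
    csplit2 (fun i => y i ≠ 0) (fun i => x i ≠ 0) _ _ (fun i => by tauto) (fun i => by tauto)
  have hYsplit : N * (Finset.univ.filter fun i => y i ≠ 0).card
      = N * (Finset.univ.filter fun i => y i ≠ 0 ∧ x i ≠ 0).card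
        + N * (Finset.univ.filter fun i => y i ≠ 0 ∧ x i = 0).card := by
    rw [hY0, Nat.mul_add]
  -- sum lower bounds
  have hdisj : Disjoint (Finset.univ.filter fun i => x i ≠ 0 ∧ y i = 0)
      (Finset.univ.filter fun i => y i ≠ 0) := by
    rw [Finset.disjoint_left]
    intro i hi1 hi2
    rw [Finset.mem_filter] at hi1 hi2
    exact hi2.2 hi1.2.2
  have hsum1 : ∑ i ∈ (Finset.univ.filter fun i => x i ≠ 0 ∧ y i = 0), cnt i
      = N * (Finset.univ.filter fun i => x i ≠ 0 ∧ y i = 0).card := by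
    calc ∑ i ∈ (Finset.univ.filter fun i => x i ≠ 0 ∧ y i = 0), cnt i
        = ∑ _i ∈ (Finset.univ.filter fun i => x i ≠ 0 ∧ y i = 0), N :=
          Finset.sum_congr rfl fun i hi => by
            rw [Finset.mem_filter] at hi
            exact hSY i hi.2.2 hi.2.1
      _ = _ := by rw [Finset.sum_const, smul_eq_mul, Nat.mul_comm]
  have hsum2 : N * (Finset.univ.filter fun i => y i ≠ 0).card
      ≤ 2 * ∑ i ∈ (Finset.univ.filter fun i => y i ≠ 0), cnt i := by
    calc N * (Finset.univ.filter fun i => y i ≠ 0).card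
        = ∑ _i ∈ (Finset.univ.filter fun i => y i ≠ 0), N := by
          rw [Finset.sum_const, smul_eq_mul, Nat.mul_comm]
      _ ≤ ∑ i ∈ (Finset.univ.filter fun i => y i ≠ 0), 2 * cnt i :=
          Finset.sum_le_sum fun i hi => by
            rw [Finset.mem_filter] at hi
            exact hYb i hi.2
      _ = 2 * ∑ i ∈ (Finset.univ.filter fun i => y i ≠ 0), cnt i := by
          rw [Finset.mul_sum]
  have hsub : ∑ i ∈ (Finset.univ.filter fun i => x i ≠ 0 ∧ y i = 0), cnt i
      + ∑ i ∈ (Finset.univ.filter fun i => y i ≠ 0), cnt i ≤ ∑ i : ι, cnt i := by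
    haveI : DecidableEq ι := Classical.decEq _
    rw [← Finset.sum_union hdisj]
    exact Finset.sum_le_sum_of_subset (Finset.subset_univ _)
  -- combine via omega on product atoms
  have hNK : N * (Finset.univ.filter fun i => y i ≠ 0 ∧ x i = 0).card
      ≤ N * (Finset.univ.filter fun i => y i ≠ 0 ∧ x i ≠ 0).card := by
    omega
  exact Nat.le_of_mul_le_mul_left hNK hN

lemma main_ind : ∀ (M : ℕ) (ι : Type) [Fintype ι] (Λ : AddSubgroup (ι → Ac)),
    (Λ : Set (ι → Ac)).Finite → (∀ x ∈ Λ, wtF x ≤ M) →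
    (∀ i, ∃ x ∈ Λ, x i ≠ 0) → Fintype.card ι ≤ f M := by
  intro M
  induction M using Nat.strong_induction_on with
  | _ M ih =>
    intro ι _ Λ hfin hwt hfull
    rcases Nat.eq_zero_or_pos M with hM0 | hM1
    · subst hM0
      haveI : IsEmpty ι := by
        by_contra h
        rw [not_isEmpty_iff] at h
        obtain ⟨i⟩ := h
        obtain ⟨x, hx, hxi⟩ := hfull i
        have h0 := hwt x hx
        rw [Nat.le_zero, wtF, Finset.card_eq_zero, Finset.filter_eq_empty_iff] at h0
        exact h0 (Finset.mem_univ i) hxi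
      simp [Fintype.card_eq_zero]
    · -- pick a maximal-weight element
      obtain ⟨x, hx, hmax⟩ : ∃ x ∈ Λ, ∀ y ∈ Λ, wtF y ≤ wtF x := by
        obtain ⟨x, hx, hmax⟩ := Finset.exists_max_image hfin.toFinset wtF
          ⟨0, by rw [Set.Finite.mem_toFinset]; exact Λ.zero_mem⟩
        rw [Set.Finite.mem_toFinset] at hx
        exact ⟨x, hx, fun y hy => hmax y (by rwa [Set.Finite.mem_toFinset])⟩
      -- project away the support of x
      let ι' := {i : ι // x i = 0}
      let π : (ι → Ac) →+ (ι' → Ac) :=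
        { toFun := fun g i => g i.1
          map_zero' := rfl
          map_add' := fun _ _ => rfl }
      let Λ' : AddSubgroup (ι' → Ac) := Λ.map π
      have hfin' : (Λ' : Set (ι' → Ac)).Finite := by
        have : (Λ' : Set (ι' → Ac)) = π '' (Λ : Set (ι → Ac)) := by
          simp [Λ', AddSubgroup.coe_map]
        rw [this]
        exact hfin.image _
      -- weight of projected elements
      have hwt'eq : ∀ g : ι → Ac, wtF (π g)
          = (Finset.univ.filter fun i => g i ≠ 0 ∧ x i = 0).card := by
        intro g
        rw [wtF, ← Fintype.card_subtype, ← Fintype.card_subtype]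
        apply Fintype.card_congr
        exact ((Equiv.subtypeSubtypeEquivSubtypeInter (fun i => x i = 0)
          (fun i => g i ≠ 0)).trans (Equiv.subtypeEquivRight fun i => by tauto))
      have hwt' : ∀ g' ∈ Λ', wtF g' ≤ M / 2 := by
        intro g' hg'
        obtain ⟨g, hg, rfl⟩ := hg'
        have h1 := key_le Λ hfin x hx hmax g hg
        have h2 : (Finset.univ.filter fun i => g i ≠ 0 ∧ x i ≠ 0).card
            + (Finset.univ.filter fun i => g i ≠ 0 ∧ x i = 0).card = wtF g := by
          rw [wtF]
          exact (csplit2 (fun i => g i ≠ 0) (fun i => x i ≠ 0) _ _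
            (fun i => by tauto) (fun i => by tauto)).symm
        have h3 := hwt g hg
        rw [hwt'eq g]
        omega
      have hfull' : ∀ i' : ι', ∃ g' ∈ Λ', g' i' ≠ 0 := by
        intro i'
        obtain ⟨g, hg, hgi⟩ := hfull i'.1
        exact ⟨π g, ⟨g, hg, rfl⟩, hgi⟩
      have hIH := ih (M / 2) (Nat.div_lt_self hM1 one_lt_two) ι' Λ' hfin' hwt' hfull'
      -- cardinality split
      have hcard' : Fintype.card ι' = (Finset.univ.filter fun i => x i = 0).card :=
        Fintype.card_subtype _
      have hsp := Finset.card_filter_add_card_filter_not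
        (s := (Finset.univ : Finset ι)) (p := fun i => x i = 0)
      rw [Finset.card_univ] at hsp
      have hcard2 : wtF x = (Finset.univ.filter fun i => ¬ x i = 0).card := rfl
      have hxM : wtF x ≤ M := hwt x hx
      have hf := f_rec hM1
      omega

theorem stmt_6 (e M : ℕ) (he : 3 ≤ e) (hM : 2 ≤ M)
    (Λ : AddSubgroup (Fin e → AddCircle (1 : ℝ)))
    (hfin : (Λ : Set (Fin e → AddCircle (1 : ℝ))).Finite)
    (hwt : ∀ x ∈ Λ, wt x ≤ M)
    (hfull : ∀ i : Fin e, ∃ x ∈ Λ, x i ≠ 0) :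
    e ≤ f M := by
  have hwt2 : ∀ x ∈ Λ, wtF x ≤ M := by
    intro x hx
    have h := hwt x hx
    rwa [wt, Nat.card_eq_fintype_card, Fintype.card_subtype] at h
  have := main_ind M (Fin e) Λ hfin hwt2 hfull
  simpa using this
end

section
/- Let Λ be a finite abelian subgroup of (ℝ/ℤ)^e, and let x_1, x_2, …, x_q be elements of Λ chosen greedily: x_1 has maximal weight among all elements of Λ, and for j ≥ 2, x_j maximizes |supp(x_j) \ (supp(x_1) ∪ ⋯ ∪ supp(x_{j−1}))| among elements of Λ. Setting I_j = supp(x_j) \ (I_1 ∪ ⋯ ∪ I_{j−1}) with I_1 = supp(x_1), one has |I_j| ≤ ⌊|I_1| / 2^{j−1}⌋ for each j ≥ 2. -/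
/-- The support of an element of `(ℝ/ℤ)^e`. -/
def supp {e : ℕ} (x : Fin e → AddCircle (1 : ℝ)) : Set (Fin e) := {i | x i ≠ 0}

/-- `I j = supp (x j) \ (supp (x 0) ∪ ⋯ ∪ supp (x (j-1)))` (0-indexed). -/
def newSupp {e q : ℕ} (x : Fin q → (Fin e → AddCircle (1 : ℝ))) (j : Fin q) : Set (Fin e) :=
  {i | i ∈ supp (x j) ∧ ∀ k : Fin q, k < j → i ∉ supp (x k)}

theorem stmt_7 (e q : ℕ) (hq : 0 < q) (Λ : AddSubgroup (Fin e → AddCircle (1 : ℝ)))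
    (hfin : (Λ : Set (Fin e → AddCircle (1 : ℝ))).Finite)
    (x : Fin q → (Fin e → AddCircle (1 : ℝ)))
    (hxΛ : ∀ j, x j ∈ Λ)
    -- `x 0` has maximal weight in `Λ`
    (hmax : ∀ y ∈ Λ, Nat.card (supp y) ≤ Nat.card (supp (x ⟨0, hq⟩)))
    -- the greedy choice: `x j` maximizes the number of new support indices
    (hgreedy : ∀ j : Fin q, ∀ y ∈ Λ,
      Nat.card {i : Fin e | i ∈ supp y ∧ ∀ k : Fin q, k < j → i ∉ supp (x k)} ≤
      Nat.card (newSupp x j)) :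
    ∀ j : Fin q, Nat.card (newSupp x j) ≤ Nat.card (supp (x ⟨0, hq⟩)) / 2 ^ (j : ℕ) := by
  have key : ∀ n (h : n < q) (h' : n + 1 < q),
      2 * (newSupp x ⟨n + 1, h'⟩).ncard ≤ (newSupp x ⟨n, h⟩).ncard := by
    intro n h h'
    set j : Fin q := ⟨n, h⟩ with hj
    set j' : Fin q := ⟨n + 1, h'⟩ with hj'
    have hjj' : j < j' := by simp [hj, hj', Fin.lt_def]
    set I := newSupp x j with hI
    set I' := newSupp x j' with hI'
    set T := I ∩ supp (x j') with hT
    have hTsub : T ⊆ I := Set.inter_subset_left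
    have hI'notj : ∀ i ∈ I', i ∉ supp (x j) := fun i hi => hi.2 j hjj'
    have hIsuppj : I ⊆ supp (x j) := fun i hi => hi.1
    -- inequality (1): T.ncard + I'.ncard ≤ I.ncard
    have h1 : T.ncard + I'.ncard ≤ I.ncard := by
      have hdisj : Disjoint T I' := by
        rw [Set.disjoint_left]
        intro i hiT hiI'
        exact hI'notj i hiI' (hIsuppj hiT.1)
      have hsub : T ∪ I' ⊆ {i : Fin e | i ∈ supp (x j') ∧ ∀ k : Fin q, k < j → i ∉ supp (x k)} := by
        rintro i (⟨hiI, his⟩ | hiI')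
        · exact ⟨his, hiI.2⟩
        · exact ⟨hiI'.1, fun k hk => hiI'.2 k (hk.trans hjj')⟩
      have hg := hgreedy j (x j') (hxΛ j')
      rw [Nat.card_coe_set_eq, Nat.card_coe_set_eq] at hg
      calc T.ncard + I'.ncard = (T ∪ I').ncard :=
            (Set.ncard_union_eq hdisj (Set.toFinite _) (Set.toFinite _)).symm
        _ ≤ _ := Set.ncard_le_ncard hsub (Set.toFinite _)
        _ ≤ I.ncard := hg
    -- inequality (2): I'.ncard ≤ T.ncard, via z = x j + x j'
    have h2 : I'.ncard ≤ T.ncard := by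
      set z := x j + x j' with hz
      have hzΛ : z ∈ Λ := Λ.add_mem (hxΛ j) (hxΛ j')
      have hdisj : Disjoint (I \ supp (x j')) I' := by
        rw [Set.disjoint_left]
        intro i hi hiI'
        exact hI'notj i hiI' (hIsuppj hi.1)
      have hsub : (I \ supp (x j')) ∪ I' ⊆
          {i : Fin e | i ∈ supp z ∧ ∀ k : Fin q, k < j → i ∉ supp (x k)} := by
        rintro i (⟨hiI, his⟩ | hiI')
        · refine ⟨?_, hiI.2⟩
          have h0 : x j' i = 0 := by
            by_contra hne; exact his hne
          show z i ≠ 0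
          simp only [hz, Pi.add_apply, h0, add_zero]
          exact hiI.1
        · refine ⟨?_, fun k hk => hiI'.2 k (hk.trans hjj')⟩
          have h0 : x j i = 0 := by
            by_contra hne; exact hI'notj i hiI' hne
          show z i ≠ 0
          simp only [hz, Pi.add_apply, h0, zero_add]
          exact hiI'.1
      have hg := hgreedy j z hzΛ
      rw [Nat.card_coe_set_eq, Nat.card_coe_set_eq] at hg
      have hdiffeq : I \ supp (x j') = I \ T := by
        ext i; simp only [hT, Set.mem_diff, Set.mem_inter_iff]; tauto
      have hTle : T.ncard ≤ I.ncard := Set.ncard_le_ncard hTsub (Set.toFinite _)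
      have hcard : (I \ supp (x j')).ncard = I.ncard - T.ncard := by
        rw [hdiffeq, Set.ncard_diff hTsub (Set.toFinite _)]
      have hchain : (I \ supp (x j')).ncard + I'.ncard ≤ I.ncard := by
        calc (I \ supp (x j')).ncard + I'.ncard = ((I \ supp (x j')) ∪ I').ncard :=
              (Set.ncard_union_eq hdisj (Set.toFinite _) (Set.toFinite _)).symm
          _ ≤ _ := Set.ncard_le_ncard hsub (Set.toFinite _)
          _ ≤ I.ncard := hg
      omega
    omega
  have main : ∀ n (h : n < q),
      (newSupp x ⟨n, h⟩).ncard ≤ (supp (x ⟨0, hq⟩)).ncard / 2 ^ n := by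
    intro n
    induction n with
    | zero =>
      intro h
      have heq : newSupp x ⟨0, h⟩ = supp (x ⟨0, hq⟩) := by
        ext i
        simp only [newSupp, Set.mem_setOf_eq]
        constructor
        · exact fun hi => hi.1
        · exact fun hi => ⟨hi, fun k hk => absurd hk (by simp [Fin.lt_def])⟩
      rw [heq]; simp
    | succ n ih =>
      intro h'
      have h : n < q := Nat.lt_of_succ_lt h'
      have hk := key n h h'
      have hih := ih h
      have step : (newSupp x ⟨n + 1, h'⟩).ncard ≤ (newSupp x ⟨n, h⟩).ncard / 2 :=
        (Nat.le_div_iff_mul_le two_pos).mpr (by omega)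
      calc (newSupp x ⟨n + 1, h'⟩).ncard ≤ (newSupp x ⟨n, h⟩).ncard / 2 := step
        _ ≤ ((supp (x ⟨0, hq⟩)).ncard / 2 ^ n) / 2 := Nat.div_le_div_right hih
        _ = (supp (x ⟨0, hq⟩)).ncard / 2 ^ (n + 1) := by
            rw [Nat.div_div_eq_div_mul, pow_succ]
  intro j
  rw [Nat.card_coe_set_eq, Nat.card_coe_set_eq]
  have := main j.val j.isLt
  simpa using this
end
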